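/- arXiv:0908.1298 — 2 statements merged into one kernel-verified Lean document; each statement's English description precedes it below -/
import Mathlib

section
/- Fix integers j, k, M ≥ 1 and a positive integer n with k dividing nj, and set m = nj/k and E = nj. Consider the configuration-model (j,k)-regular LDPC ensemble: each of n variable nodes has j sockets, each of m check nodes has k sockets, and the variable sockets are matched to the check sockets by a uniformly random permutation σ of {1, …, E}. For a labeling z : {1, …, n} → {0, 1, …, M}, each edge inherits the label z_i of its variable node i; z is a degree-M pseudocodeword of the configuration if for every check node, the length-k vector w of labels on its sockets satisfies w_i ≤ Σ_{ℓ≠i} w_ℓ for all i ∈ {1, …, k} and Σ_{i=1}^k w_i is even. Let q = (q_1, …, q_M) be rationals with q_r ≥ 0, Σ q_r ≤ 1, and q_r n ∈ ℤ for all r. Then the expected number (over σ) of degree-M pseudocodewords z of type (q_1 n, …, q_M n) equals C(n; q n) · Coeff[(B^{(M)}(x))^m, x_1^{j q_1 n} ⋯ x_M^{j q_M n}] / C(jn; j q n), where C(n; q n) = n!/((n − Σ q_r n)! ∏ (q_r n)!) and C(jn; j q n) = (jn)!/((jn − Σ j q_r n)! ∏ (j q_r n)!). -/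
open Finset MvPolynomial

/-- The multinomial coefficient `C(k; u) = k! / ((k - ∑ u_r)! ∏ u_r!)`,
taken to be `0` when `∑ u_r > k`. -/
def multCoeff (k : ℕ) {N : ℕ} (u : Fin N → ℕ) : ℕ :=
  if ∑ r, u r ≤ k then
    Nat.factorial k / (Nat.factorial (k - ∑ r, u r) * ∏ r, Nat.factorial (u r))
  else 0

/-- The set `S` of nonnegative integer vectors `u = (u_1, …, u_M)` satisfying
(S-1) `∑ u_r ≤ k`; (S-2) `∑_{r odd} u_r` even; (S-3) if there is `c` with
`u_c = 1` and `u_r = 0` for `c < r ≤ M`, then `c ≤ ∑_{r=1}^{c-1} r u_r`. -/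
def Sset (k M : ℕ) : Finset (Fin M → ℕ) :=
  (Fintype.piFinset fun _ : Fin M => Finset.range (k + 1)) |>.filter
    (fun u : Fin M → ℕ => ∑ r, u r ≤ k ∧
      Even (∑ r ∈ Finset.univ.filter (fun r : Fin M => Odd ((r : ℕ) + 1)), u r) ∧
      ∀ c : Fin M, (u c = 1 ∧ ∀ r : Fin M, c < r → u r = 0) →
        (c : ℕ) + 1 ≤ ∑ r ∈ Finset.univ.filter (fun r : Fin M => r < c), ((r : ℕ) + 1) * u r)

/-- The degree-`M` pseudoweight enumerating function of the length-`k`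
single parity-check code: `B^{(M)}(x) = ∑_{u ∈ S} C(k; u) x_1^{u_1} ⋯ x_M^{u_M}`. -/
noncomputable def Bpoly (k M : ℕ) : MvPolynomial (Fin M) ℝ :=
  ∑ u ∈ Sset k M, MvPolynomial.C (multCoeff k u : ℝ) * ∏ r : Fin M, MvPolynomial.X r ^ u r

/-- The variable node owning variable socket `s` (each of the `n` variable
nodes has `j` sockets). -/
def varNode (n j : ℕ) (s : Fin (n * j)) : Fin n :=
  ⟨s.val / j, by
    rcases Nat.eq_zero_or_pos j with hj | hj
    · exact absurd s.isLt (by simp [hj])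
    · exact (Nat.div_lt_iff_lt_mul hj).mpr s.isLt⟩

/-- The `i`-th socket of check node `c` (each of the `m = nj/k` check nodes has
`k` sockets), as an index among all `nj = mk` sockets. -/
def checkSocket (n j k : ℕ) (c : Fin (n * j / k)) (i : Fin k) : Fin (n * j) :=
  ⟨c.val * k + i.val, by
    have h1 : c.val * k + i.val < (c.val + 1) * k := by
      rw [Nat.succ_mul]; exact Nat.add_lt_add_left i.isLt _
    have h2 : (c.val + 1) * k ≤ (n * j / k) * k := Nat.mul_le_mul_right k c.isLt
    have h3 : (n * j / k) * k ≤ n * j := Nat.div_mul_le_self _ _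
    omega⟩

/-- `z : {1,…,n} → {0,1,…,M}` is a degree-`M` pseudocodeword of the
configuration given by the socket matching `σ`: at every check node, the
vector `w` of labels on its `k` sockets (each edge inheriting the label of
its variable node) satisfies `w_i ≤ ∑_{ℓ ≠ i} w_ℓ` for all `i` and `∑_i w_i`
is even. -/
def IsPseudocodeword (n j k M : ℕ) (σ : Equiv.Perm (Fin (n * j)))
    (z : Fin n → Fin (M + 1)) : Prop :=
  ∀ c : Fin (n * j / k),
    (∀ i : Fin k,
        (z (varNode n j (σ.symm (checkSocket n j k c i))) : ℕ) ≤
          ∑ ℓ ∈ Finset.univ.erase i,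
            (z (varNode n j (σ.symm (checkSocket n j k c ℓ))) : ℕ)) ∧
      Even (∑ i : Fin k, (z (varNode n j (σ.symm (checkSocket n j k c i))) : ℕ))

/-- The number of degree-`M` pseudocodewords of type `u` of the configuration
given by `σ`. -/
noncomputable def countType (n j k M : ℕ) (σ : Equiv.Perm (Fin (n * j)))
    (u : Fin M → ℕ) : ℕ :=
  Nat.card {z : Fin n → Fin (M + 1) //
    IsPseudocodeword n j k M σ z ∧
      ∀ r : Fin M, (Finset.univ.filter fun i : Fin n => (z i : ℕ) = (r : ℕ) + 1).card = u r}

/-- The expected number, over a uniformly random matching `σ` of the `nj`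
variable sockets to the `nj = mk` check sockets, of degree-`M`
pseudocodewords of type `u`. -/
noncomputable def expectType (n j k M : ℕ) (u : Fin M → ℕ) : ℝ :=
  (∑ σ : Equiv.Perm (Fin (n * j)), (countType n j k M σ u : ℝ)) /
    (Nat.factorial (n * j) : ℝ)


section Infra
variable {α β : Type*} [Fintype α] [DecidableEq α] [Fintype β] [DecidableEq β]

/-- fiber count -/
def fib (f : α → β) (b : β) : ℕ := (Finset.univ.filter fun a => f a = b).card

lemma fib_eq_card (f : α → β) (b : β) : fib f b = Fintype.card {a // f a = b} :=
  (Fintype.card_subtype _).symm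

lemma sum_fib (f : α → β) : ∑ b, fib f b = Fintype.card α := by
  classical
  rw [← Finset.card_univ, Finset.card_eq_sum_card_fiberwise (fun a _ => Finset.mem_univ (f a))]
  rfl

lemma fib_comp_equiv {α' : Type*} [Fintype α'] [DecidableEq α'] (e : α' ≃ α) (f : α → β)
    (b : β) : fib (f ∘ e) b = fib f b := by
  rw [fib_eq_card, fib_eq_card]
  exact Fintype.card_congr (e.subtypeEquiv fun a => Iff.rfl)

lemma exists_perm_comp (f g : α → β) (h : ∀ b, fib f b = fib g b) :
    ∃ σ : Equiv.Perm α, f ∘ σ = g := by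
  have e : ∀ c, {a // g a = c} ≃ {a // f a = c} := fun c =>
    Fintype.equivOfCardEq (by rw [← fib_eq_card, ← fib_eq_card, h])
  exact ⟨Equiv.ofFiberEquiv e, funext fun a => Equiv.ofFiberEquiv_map e a⟩

lemma card_perm_comp (f g : α → β) (h : ∀ b, fib f b = fib g b) :
    Nat.card {σ : Equiv.Perm α // f ∘ σ = g} = ∏ b, (fib f b).factorial := by
  rw [Nat.card_eq_fintype_card]
  obtain ⟨σ₀, hσ₀⟩ := exists_perm_comp f g h
  have e : {σ : Equiv.Perm α // f ∘ σ = g} ≃ {τ : Equiv.Perm α // f ∘ τ = f} := by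
    refine ⟨fun σ => ⟨σ.1 * σ₀⁻¹, ?_⟩, fun τ => ⟨τ.1 * σ₀, ?_⟩, ?_, ?_⟩
    · funext a
      have h1 : f (σ.1 (σ₀⁻¹ a)) = g (σ₀⁻¹ a) := congrFun σ.2 _
      have h2 : g (σ₀⁻¹ a) = f (σ₀ (σ₀⁻¹ a)) := (congrFun hσ₀ _).symm
      simpa using h1.trans (h2.trans (by rw [Equiv.Perm.inv_def, Equiv.apply_symm_apply]))
    · funext a
      have h1 : f (τ.1 (σ₀ a)) = f (σ₀ a) := congrFun τ.2 _
      exact h1.trans (congrFun hσ₀ a)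
    · rintro ⟨σ, hσ⟩; ext a; simp
    · rintro ⟨τ, hτ⟩; ext a; simp
  rw [Fintype.card_congr e, DomMulAct.stabilizer_card f]
  exact Finset.prod_congr rfl fun b _ => by rw [← fib_eq_card]

lemma card_perm_comp_zero (f g : α → β) (h : ¬ ∀ b, fib f b = fib g b) :
    Nat.card {σ : Equiv.Perm α // f ∘ σ = g} = 0 := by
  rw [Nat.card_eq_fintype_card, Fintype.card_eq_zero_iff]
  refine ⟨fun ⟨σ, hσ⟩ => h fun b => ?_⟩
  have : fib (f ∘ σ) b = fib f b := fib_comp_equiv σ f b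
  rw [← this, hσ]

/-- fiber of sigma.fst-like -/
def sigmaFstFiberEquiv {γ : β → Type*} (b : β) :
    {p : Σ b', γ b' // p.1 = b} ≃ γ b where
  toFun p := p.2 ▸ p.1.2
  invFun x := ⟨⟨b, x⟩, rfl⟩
  left_inv := by rintro ⟨⟨b', x⟩, rfl⟩; rfl
  right_inv x := rfl

lemma card_fiberFuns (v : β → ℕ) (h : ∑ b, v b = Fintype.card α) :
    Nat.card {w : α → β // ∀ b, fib w b = v b} = Nat.multinomial Finset.univ v := by
  -- reference function
  have hcard : Fintype.card (Σ b, Fin (v b)) = Fintype.card α := by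
    simp [Fintype.card_sigma, h]
  obtain ⟨e⟩ := Fintype.card_eq.mp hcard
  set w₀ : α → β := fun a => (e.symm a).1 with hw₀
  have hfibw₀ : ∀ b, fib w₀ b = v b := by
    intro b
    rw [fib_eq_card]
    rw [Fintype.card_congr ((Equiv.subtypeEquiv e.symm (fun a => Iff.rfl)).trans
      (sigmaFstFiberEquiv b))]
    simp
  -- count permutations by composed function
  have key : (Fintype.card α).factorial =
      ((Finset.univ.filter fun w : α → β => ∀ b, fib w b = v b).card) *
        ∏ b, (v b).factorial := by
    have h1 : (Finset.univ : Finset (Equiv.Perm α)).card =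
        ∑ w : α → β, (Finset.univ.filter fun σ : Equiv.Perm α => w₀ ∘ σ = w).card :=
      Finset.card_eq_sum_card_fiberwise (fun σ _ => Finset.mem_univ (w₀ ∘ σ))
    rw [← Fintype.card_perm, ← Finset.card_univ, h1]
    rw [← Finset.sum_filter_add_sum_filter_not Finset.univ
      (fun w : α → β => ∀ b, fib w b = v b)
      (fun w => (Finset.univ.filter fun σ : Equiv.Perm α => w₀ ∘ σ = w).card)]
    have hA : ∀ w ∈ Finset.univ.filter (fun w : α → β => ∀ b, fib w b = v b),
        (Finset.univ.filter fun σ : Equiv.Perm α => w₀ ∘ σ = w).card =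
          ∏ b, (v b).factorial := by
      intro w hw
      rw [Finset.mem_filter] at hw
      rw [← Fintype.card_subtype, ← Nat.card_eq_fintype_card,
        card_perm_comp w₀ w (fun b => by rw [hfibw₀, hw.2])]
      exact Finset.prod_congr rfl fun b _ => by rw [hfibw₀]
    have hB : ∀ w ∈ Finset.univ.filter (fun w : α → β => ¬ ∀ b, fib w b = v b),
        (Finset.univ.filter fun σ : Equiv.Perm α => w₀ ∘ σ = w).card = 0 := by
      intro w hw
      rw [Finset.mem_filter] at hw
      rw [← Fintype.card_subtype, ← Nat.card_eq_fintype_card, card_perm_comp_zero w₀ w]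
      intro hc
      exact hw.2 fun b => by rw [← hc, hfibw₀]
    rw [Finset.sum_congr rfl hA, Finset.sum_congr rfl hB, Finset.sum_const,
      Finset.sum_const_zero, add_zero, smul_eq_mul]
  have hspec : Nat.multinomial Finset.univ v * ∏ b, (v b).factorial =
      (Fintype.card α).factorial := by
    rw [mul_comm, Nat.multinomial_spec, h]
  rw [Nat.card_eq_fintype_card, Fintype.card_subtype]
  have hpos : 0 < ∏ b, (v b).factorial :=
    Finset.prod_pos fun b _ => Nat.factorial_pos _
  exact Nat.eq_of_mul_eq_mul_right hpos (by rw [← key, hspec])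

section Words
variable {k M : ℕ}

/-- type of a word -/
def typeOf (w : Fin k → Fin (M + 1)) : Fin M → ℕ :=
  fun r => (Finset.univ.filter fun i => (w i : ℕ) = (r : ℕ) + 1).card

lemma typeOf_eq_fib (w : Fin k → Fin (M + 1)) (r : Fin M) :
    typeOf w r = fib w r.succ := by
  unfold typeOf fib
  congr 1
  apply Finset.filter_congr
  intro i _
  constructor
  · intro h; exact Fin.ext (by simpa using h)
  · intro h; rw [h]; simp

lemma sum_val_eq (w : Fin k → Fin (M + 1)) :
    ∑ i, (w i : ℕ) = ∑ r : Fin M, ((r : ℕ) + 1) * typeOf w r := by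
  classical
  have h1 : ∑ i, (w i : ℕ) = ∑ b : Fin (M+1), ∑ i ∈ Finset.univ.filter
      (fun i => w i = b), (w i : ℕ) :=
    (Finset.sum_fiberwise Finset.univ w (fun i => (w i : ℕ))).symm
  rw [h1]
  have h2 : ∀ b : Fin (M+1), ∑ i ∈ Finset.univ.filter (fun i => w i = b), (w i : ℕ)
      = (b : ℕ) * fib w b := by
    intro b
    rw [Finset.sum_congr rfl (fun i hi => by
      rw [(Finset.mem_filter.mp hi).2]), Finset.sum_const, smul_eq_mul, mul_comm]
    rfl
  rw [Finset.sum_congr rfl (fun b _ => h2 b), Fin.sum_univ_succ]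
  simp [typeOf_eq_fib]

lemma sum_typeOf_le (w : Fin k → Fin (M + 1)) : ∑ r, typeOf w r ≤ k := by
  have := sum_fib w
  rw [Fin.sum_univ_succ] at this
  simp only [Fintype.card_fin] at this
  calc ∑ r, typeOf w r = ∑ r : Fin M, fib w r.succ := by
        exact Finset.sum_congr rfl fun r _ => typeOf_eq_fib w r
    _ ≤ k := by omega

/-- decomposition of the weighted sum at the top index -/
lemma weighted_sum_decomp (t : Fin M → ℕ) (c : Fin M) (htop : ∀ r, c < r → t r = 0) :
    ∑ r : Fin M, ((r : ℕ) + 1) * t r =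
      (∑ r ∈ Finset.univ.filter (fun r : Fin M => r < c), ((r : ℕ) + 1) * t r)
        + ((c : ℕ) + 1) * t c := by
  classical
  rw [← Finset.sum_filter_add_sum_filter_not Finset.univ (fun r : Fin M => r < c)
    (fun r => ((r : ℕ) + 1) * t r)]
  congr 1
  have hset : Finset.univ.filter (fun r : Fin M => ¬ r < c) =
      insert c (Finset.univ.filter fun r : Fin M => c < r) := by
    ext r
    simp only [Finset.mem_filter, Finset.mem_univ, true_and, Finset.mem_insert, not_lt]
    constructor
    · intro h
      rcases lt_or_eq_of_le h with h' | h'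
      · exact Or.inr h'
      · exact Or.inl h'.symm
    · rintro (rfl | h)
      · exact le_refl _
      · exact le_of_lt h
  rw [hset, Finset.sum_insert (by simp)]
  rw [Finset.sum_congr rfl (fun r hr => by
    rw [htop r (Finset.mem_filter.mp hr).2, mul_zero])]
  simp

lemma weighted_sum_mod_two (t : Fin M → ℕ) :
    (∑ r : Fin M, ((r : ℕ) + 1) * t r) % 2 =
      (∑ r ∈ Finset.univ.filter (fun r : Fin M => Odd ((r : ℕ) + 1)), t r) % 2 := by
  classical
  rw [Finset.sum_nat_mod (Finset.univ) 2 (fun r : Fin M => ((r : ℕ) + 1) * t r),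
    Finset.sum_nat_mod (Finset.univ.filter (fun r : Fin M => Odd ((r : ℕ) + 1))) 2 t]
  congr 1
  rw [← Finset.sum_filter_add_sum_filter_not Finset.univ
    (fun r : Fin M => Odd ((r : ℕ) + 1)) (fun r => ((r : ℕ) + 1) * t r % 2)]
  have h1 : ∀ r ∈ Finset.univ.filter (fun r : Fin M => Odd ((r : ℕ) + 1)),
      ((r : ℕ) + 1) * t r % 2 = t r % 2 := by
    intro r hr
    have hodd := (Finset.mem_filter.mp hr).2
    rw [Nat.mul_mod, Nat.odd_iff.mp hodd, one_mul, Nat.mod_mod_of_dvd _ dvd_rfl]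
  have h2 : ∀ r ∈ Finset.univ.filter (fun r : Fin M => ¬ Odd ((r : ℕ) + 1)),
      ((r : ℕ) + 1) * t r % 2 = 0 := by
    intro r hr
    have heven : ((r : ℕ) + 1) % 2 = 0 :=
      Nat.even_iff.mp (Nat.not_odd_iff_even.mp (Finset.mem_filter.mp hr).2)
    rw [Nat.mul_mod, heven, zero_mul, Nat.zero_mod]
  rw [Finset.sum_congr rfl h1, Finset.sum_congr rfl h2, Finset.sum_const_zero, add_zero]

lemma even_weighted_sum (t : Fin M → ℕ) :
    Even (∑ r : Fin M, ((r : ℕ) + 1) * t r) ↔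
      Even (∑ r ∈ Finset.univ.filter (fun r : Fin M => Odd ((r : ℕ) + 1)), t r) := by
  rw [Nat.even_iff, Nat.even_iff, weighted_sum_mod_two]

/-- validity of a word for the single parity-check code -/
def Valid (w : Fin k → Fin (M + 1)) : Prop :=
  (∀ i, (w i : ℕ) ≤ ∑ ℓ ∈ Finset.univ.erase i, (w ℓ : ℕ)) ∧ Even (∑ i, (w i : ℕ))

lemma mem_Sset_iff (u : Fin M → ℕ) :
    u ∈ Sset k M ↔ ((∀ r, u r ≤ k) ∧ ∑ r, u r ≤ k ∧
      Even (∑ r ∈ Finset.univ.filter (fun r : Fin M => Odd ((r : ℕ) + 1)), u r) ∧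
      ∀ c : Fin M, (u c = 1 ∧ ∀ r : Fin M, c < r → u r = 0) →
        (c : ℕ) + 1 ≤ ∑ r ∈ Finset.univ.filter (fun r : Fin M => r < c),
          ((r : ℕ) + 1) * u r) := by
  simp [Sset, Fintype.mem_piFinset, Finset.mem_range, Nat.lt_succ_iff]

lemma valid_iff_type_mem (w : Fin k → Fin (M + 1)) :
    Valid w ↔ typeOf w ∈ Sset k M := by
  classical
  rw [mem_Sset_iff]
  have hle : ∀ r, typeOf w r ≤ k := fun r => by
    calc typeOf w r ≤ (Finset.univ : Finset (Fin k)).card := Finset.card_filter_le _ _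
      _ = k := by simp
  constructor
  · rintro ⟨hmax, heven⟩
    refine ⟨hle, sum_typeOf_le w, ?_, ?_⟩
    · rw [← even_weighted_sum, ← sum_val_eq]; exact heven
    · rintro c ⟨hc1, hc0⟩
      have hdecomp := weighted_sum_decomp (typeOf w) c hc0
      have hpos : 0 < typeOf w c := by omega
      obtain ⟨i, hi⟩ := Finset.card_pos.mp hpos
      have hwi : (w i : ℕ) = (c : ℕ) + 1 := (Finset.mem_filter.mp hi).2
      have hsplit : (w i : ℕ) + ∑ ℓ ∈ Finset.univ.erase i, (w ℓ : ℕ) = ∑ ℓ, (w ℓ : ℕ) :=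
        Finset.add_sum_erase _ (fun ℓ => ((w ℓ : ℕ) : ℕ)) (Finset.mem_univ i)
      have hm := hmax i
      rw [sum_val_eq, hdecomp, hc1] at hsplit
      omega
  · rintro ⟨_, _, heven, hS3⟩
    constructor
    · intro i
      rcases Nat.eq_zero_or_pos (w i : ℕ) with h0 | h0
      · simp [h0]
      · have hiM : (w i : ℕ) < M + 1 := (w i).isLt
        obtain ⟨c, hwi⟩ : ∃ c : Fin M, (w i : ℕ) = (c : ℕ) + 1 :=
          ⟨⟨(w i : ℕ) - 1, by omega⟩, by show (w i : ℕ) = (w i : ℕ) - 1 + 1; omega⟩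
        have hcmem : i ∈ Finset.univ.filter fun i' => (w i' : ℕ) = (c : ℕ) + 1 := by
          simp [hwi]
        have hcpos : 0 < typeOf w c := Finset.card_pos.mpr ⟨i, hcmem⟩
        have hne : (Finset.univ.filter fun r : Fin M => typeOf w r ≠ 0).Nonempty :=
          ⟨c, by simp; omega⟩
        set cm := (Finset.univ.filter fun r : Fin M => typeOf w r ≠ 0).max' hne with hcm
        have hcmpos : typeOf w cm ≠ 0 := by
          have := Finset.max'_mem _ hne
          rw [← hcm] at this
          exact (Finset.mem_filter.mp this).2
        have hccm : c ≤ cm := Finset.le_max' _ c (by simp; omega)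
        have htop : ∀ r, cm < r → typeOf w r = 0 := by
          intro r hr
          by_contra hne'
          have : r ≤ cm := Finset.le_max' _ r (by simp [hne'])
          exact absurd hr (not_lt.mpr this)
        have hdecomp := weighted_sum_decomp (typeOf w) cm htop
        have hkey : 2 * ((cm : ℕ) + 1) ≤ ∑ r : Fin M, ((r : ℕ) + 1) * typeOf w r := by
          rcases Nat.lt_or_ge (typeOf w cm) 2 with h2 | h2
          · have h1 : typeOf w cm = 1 := by omega
            have := hS3 cm ⟨h1, htop⟩
            rw [hdecomp, h1]
            omega
          · have : ((cm : ℕ) + 1) * 2 ≤ ((cm : ℕ) + 1) * typeOf w cm :=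
              Nat.mul_le_mul_left _ h2
            rw [hdecomp]
            omega
        have hsplit : (w i : ℕ) + ∑ ℓ ∈ Finset.univ.erase i, (w ℓ : ℕ) = ∑ ℓ, (w ℓ : ℕ) :=
          Finset.add_sum_erase _ (fun ℓ => ((w ℓ : ℕ) : ℕ)) (Finset.mem_univ i)
        rw [sum_val_eq] at hsplit
        have hccm' : (c : ℕ) ≤ (cm : ℕ) := hccm
        omega
    · rw [sum_val_eq, even_weighted_sum]; exact heven


/-- full fiber vector including the zero label -/
def fullVec (k : ℕ) {M : ℕ} (u : Fin M → ℕ) : Fin (M + 1) → ℕ :=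
  Fin.cons (k - ∑ r, u r) u

lemma sum_fullVec {u : Fin M → ℕ} (h : ∑ r, u r ≤ k) : ∑ b, fullVec k u b = k := by
  rw [Fin.sum_univ_succ]
  simp only [fullVec, Fin.cons_zero, Fin.cons_succ]
  omega

lemma multCoeff_eq_multinomial {u : Fin M → ℕ} (h : ∑ r, u r ≤ k) :
    multCoeff k u = Nat.multinomial Finset.univ (fullVec k u) := by
  rw [multCoeff, if_pos h, Nat.multinomial]
  rw [sum_fullVec h, Fin.prod_univ_succ]
  simp only [fullVec, Fin.cons_zero, Fin.cons_succ]

lemma card_type_eq {u : Fin M → ℕ} (h : ∑ r, u r ≤ k) :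
    (Finset.univ.filter fun w : Fin k → Fin (M + 1) => typeOf w = u).card = multCoeff k u := by
  classical
  rw [← Fintype.card_subtype, ← Nat.card_eq_fintype_card, multCoeff_eq_multinomial h]
  rw [← card_fiberFuns (fullVec k u) (by rw [sum_fullVec h, Fintype.card_fin])]
  refine Nat.card_congr (Equiv.subtypeEquivRight fun w => ?_)
  constructor
  · intro ht b
    have hsum := sum_fib w
    rw [Fin.sum_univ_succ] at hsum
    simp only [Fintype.card_fin] at hsum
    have hsucc : ∀ r : Fin M, fib w r.succ = u r := fun r => by
      rw [← typeOf_eq_fib, ht]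
    induction b using Fin.cases with
    | zero =>
      rw [Finset.sum_congr rfl (fun r _ => hsucc r)] at hsum
      simp only [fullVec, Fin.cons_zero]
      have heta : ∑ r : Fin M, u r = Finset.univ.sum u := rfl
      omega
    | succ r => rw [hsucc r]; simp [fullVec]
  · intro hf
    funext r
    rw [typeOf_eq_fib, hf r.succ]
    simp [fullVec]

instance validDec : DecidablePred (fun w : Fin k → Fin (M + 1) => Valid w) := fun w => by
  unfold Valid; infer_instance

lemma Bpoly_eq_sum_valid :
    Bpoly k M = ∑ w ∈ Finset.univ.filter (fun w : Fin k → Fin (M + 1) => Valid w),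
      MvPolynomial.monomial (Finsupp.equivFunOnFinite.symm (typeOf w)) (1 : ℝ) := by
  classical
  have h1 : Bpoly k M = ∑ u ∈ Sset k M,
      MvPolynomial.monomial (Finsupp.equivFunOnFinite.symm u) ((multCoeff k u : ℝ)) := by
    apply Finset.sum_congr rfl
    intro u _
    rw [MvPolynomial.monomial_eq, Finsupp.prod_fintype _ _ (fun r => pow_zero _)]
    simp only [Finsupp.coe_equivFunOnFinite_symm]
  rw [h1, ← Finset.sum_fiberwise_of_maps_to
    (s := Finset.univ.filter (fun w : Fin k → Fin (M + 1) => Valid w))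
    (t := Sset k M) (g := typeOf)
    (fun w hw => by
      rw [Finset.mem_filter] at hw
      exact (valid_iff_type_mem w).mp hw.2)
    (fun w => MvPolynomial.monomial (Finsupp.equivFunOnFinite.symm (typeOf w)) (1 : ℝ))]
  apply Finset.sum_congr rfl
  intro u hu
  symm
  have hcard : ((Finset.univ.filter (fun w : Fin k → Fin (M + 1) => Valid w)).filter
      (fun w => typeOf w = u)).card = multCoeff k u := by
    rw [Finset.filter_filter]
    rw [show (Finset.univ.filter fun w : Fin k → Fin (M + 1) => Valid w ∧ typeOf w = u)
        = Finset.univ.filter fun w => typeOf w = u from Finset.filter_congr fun w _ => by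
      constructor
      · exact fun h => h.2
      · intro h
        exact ⟨(valid_iff_type_mem w).mpr (h ▸ hu), h⟩]
    exact card_type_eq ((mem_Sset_iff u).mp hu).2.1
  calc ∑ w ∈ (Finset.univ.filter (fun w : Fin k → Fin (M + 1) => Valid w)).filter
        (fun w => typeOf w = u),
        MvPolynomial.monomial (Finsupp.equivFunOnFinite.symm (typeOf w)) (1 : ℝ)
      = ∑ _w ∈ (Finset.univ.filter (fun w : Fin k → Fin (M + 1) => Valid w)).filter
        (fun w => typeOf w = u),
        MvPolynomial.monomial (Finsupp.equivFunOnFinite.symm u) (1 : ℝ) := by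
        apply Finset.sum_congr rfl
        intro w hw
        rw [(Finset.mem_filter.mp hw).2]
    _ = MvPolynomial.monomial (Finsupp.equivFunOnFinite.symm u) ((multCoeff k u : ℝ)) := by
        rw [Finset.sum_const, hcard, nsmul_eq_mul, ← MvPolynomial.C_eq_coe_nat,
          MvPolynomial.C_mul_monomial, mul_one]

lemma monomial_prod {ι : Type*} (s : Finset ι) (d : ι → (Fin M →₀ ℕ)) :
    ∏ c ∈ s, MvPolynomial.monomial (d c) (1 : ℝ) =
      MvPolynomial.monomial (∑ c ∈ s, d c) (1 : ℝ) := by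
  classical
  induction s using Finset.cons_induction with
  | empty => simp
  | cons a s ha ih =>
    rw [Finset.prod_cons, Finset.sum_cons, ih, MvPolynomial.monomial_mul, one_mul]

lemma coeff_Bpoly_pow (m' : ℕ) (t : Fin M →₀ ℕ) :
    MvPolynomial.coeff t ((Bpoly k M) ^ m') =
      (((Fintype.piFinset fun _ : Fin m' =>
          Finset.univ.filter (fun w : Fin k → Fin (M + 1) => Valid w)).filter
        (fun W => (∑ c, Finsupp.equivFunOnFinite.symm (typeOf (W c))) = t)).card : ℝ) := by
  classical
  have hpow : (Bpoly k M) ^ m' = ∏ _c : Fin m', Bpoly k M := by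
    rw [Finset.prod_const, Finset.card_univ, Fintype.card_fin]
  rw [hpow]
  conv_lhs => rw [Finset.prod_congr rfl (fun c _ => Bpoly_eq_sum_valid (k := k) (M := M))]
  rw [Finset.prod_univ_sum]
  rw [Finset.sum_congr rfl (fun W _ => monomial_prod Finset.univ
    (fun c => Finsupp.equivFunOnFinite.symm (typeOf (W c))))]
  rw [MvPolynomial.coeff_sum]
  rw [Finset.sum_congr rfl (fun W _ => MvPolynomial.coeff_monomial t _ (1 : ℝ))]
  rw [Finset.sum_boole]


end Words


section Graph

variable {n j k M : ℕ}

/-- subtype of a product by a fst-predicate -/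
def fstFiberEquiv {γ δ : Type*} (P : γ → Prop) :
    {p : γ × δ // P p.1} ≃ {c // P c} × δ where
  toFun p := (⟨p.1.1, p.2⟩, p.1.2)
  invFun q := ⟨(q.1.1, q.2), q.1.2⟩
  left_inv p := rfl
  right_inv q := rfl

lemma varNode_finProdFinEquiv (hj : 0 < j) (i : Fin n) (t : Fin j) :
    varNode n j (finProdFinEquiv (i, t)) = i := by
  apply Fin.ext
  show ((t : ℕ) + j * i) / j = i
  rw [Nat.add_mul_div_left _ _ hj, Nat.div_eq_of_lt t.isLt, zero_add]

lemma fib_varNode (hj : 0 < j) (z : Fin n → Fin (M + 1)) (a : Fin (M + 1)) :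
    fib (fun s : Fin (n * j) => z (varNode n j s)) a = j * fib z a := by
  classical
  have h1 := fib_comp_equiv (finProdFinEquiv : Fin n × Fin j ≃ Fin (n * j))
    (fun s : Fin (n * j) => z (varNode n j s)) a
  rw [← h1]
  have h2 : ((fun s : Fin (n * j) => z (varNode n j s)) ∘ finProdFinEquiv)
      = fun p : Fin n × Fin j => z p.1 := by
    funext p
    show z (varNode n j (finProdFinEquiv (p.1, p.2))) = z p.1
    rw [varNode_finProdFinEquiv hj]
  rw [h2, fib_eq_card, fib_eq_card]
  rw [Fintype.card_congr (fstFiberEquiv (fun i : Fin n => z i = a))]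
  rw [Fintype.card_prod, Fintype.card_fin, mul_comm]

variable (n j k) in
/-- the equivalence between check-socket pairs and sockets -/
noncomputable def cE (hmk : (n * j / k) * k = n * j) :
    Fin (n * j / k) × Fin k ≃ Fin (n * j) :=
  finProdFinEquiv.trans (finCongr hmk)

lemma cE_apply (hmk : (n * j / k) * k = n * j) (c : Fin (n * j / k)) (i : Fin k) :
    cE n j k hmk (c, i) = checkSocket n j k c i := by
  apply Fin.ext
  show ((i : ℕ) + k * c) = (c : ℕ) * k + i
  ring

lemma fib_check (hmk : (n * j / k) * k = n * j) (g : Fin (n * j) → Fin (M + 1))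
    (a : Fin (M + 1)) :
    fib g a = ∑ c : Fin (n * j / k), fib (fun i => g (checkSocket n j k c i)) a := by
  classical
  rw [← fib_comp_equiv (cE n j k hmk) g a]
  rw [fib_eq_card]
  rw [Fintype.card_congr (Equiv.subtypeProdEquivSigmaSubtype
    (fun c (i : Fin k) => (g ∘ cE n j k hmk) (c, i) = a))]
  rw [Fintype.card_sigma]
  apply Finset.sum_congr rfl
  intro c _
  rw [fib_eq_card]
  apply Fintype.card_congr
  apply Equiv.subtypeEquivRight
  intro i
  show (g (cE n j k hmk (c, i)) = a) ↔ _
  rw [cE_apply]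

end Graph

section MainCount

variable {n j k M : ℕ}

/-- per-check validity of a socket labeling -/
def GoodF (n j k M : ℕ) (g : Fin (n * j) → Fin (M + 1)) : Prop :=
  ∀ c : Fin (n * j / k), Valid (fun i => g (checkSocket n j k c i))

instance goodFDec : DecidablePred (GoodF n j k M) := fun g => by
  unfold GoodF; infer_instance

instance pseudoDec (σ : Equiv.Perm (Fin (n * j))) (z : Fin n → Fin (M + 1)) :
    Decidable (IsPseudocodeword n j k M σ z) := by
  unfold IsPseudocodeword; infer_instance

lemma isPseudo_iff (σ : Equiv.Perm (Fin (n * j))) (z : Fin n → Fin (M + 1)) :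
    IsPseudocodeword n j k M σ z ↔
      GoodF n j k M ((fun s => z (varNode n j s)) ∘ ⇑σ.symm) :=
  Iff.rfl

lemma perm_count (z : Fin n → Fin (M + 1)) :
    (Finset.univ.filter fun σ : Equiv.Perm (Fin (n * j)) =>
        IsPseudocodeword n j k M σ z).card =
      (Finset.univ.filter (fun g : Fin (n * j) → Fin (M + 1) =>
          GoodF n j k M g ∧
            ∀ b, fib (fun s => z (varNode n j s)) b = fib g b)).card *
        ∏ b, (fib (fun s => z (varNode n j s)) b).factorial := by
  classical
  set fz : Fin (n * j) → Fin (M + 1) := fun s => z (varNode n j s) with hfz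
  have h1 : (Finset.univ.filter fun σ : Equiv.Perm (Fin (n * j)) =>
      IsPseudocodeword n j k M σ z).card =
      ∑ g : Fin (n * j) → Fin (M + 1),
        ((Finset.univ.filter fun σ : Equiv.Perm (Fin (n * j)) =>
          IsPseudocodeword n j k M σ z).filter (fun σ : Equiv.Perm (Fin (n * j)) => fz ∘ ⇑σ.symm = g)).card :=
    Finset.card_eq_sum_card_fiberwise (fun σ _ => Finset.mem_univ (fz ∘ ⇑σ.symm))
  rw [h1]
  have h2 : ∀ g : Fin (n * j) → Fin (M + 1),
      ((Finset.univ.filter fun σ : Equiv.Perm (Fin (n * j)) =>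
          IsPseudocodeword n j k M σ z).filter (fun σ : Equiv.Perm (Fin (n * j)) => fz ∘ ⇑σ.symm = g)).card =
        if GoodF n j k M g ∧ (∀ b, fib fz b = fib g b) then
          ∏ b, (fib fz b).factorial else 0 := by
    intro g
    by_cases hg : GoodF n j k M g
    · have hset : (Finset.univ.filter fun σ : Equiv.Perm (Fin (n * j)) =>
          IsPseudocodeword n j k M σ z).filter (fun σ : Equiv.Perm (Fin (n * j)) => fz ∘ ⇑σ.symm = g) =
          Finset.univ.filter (fun σ : Equiv.Perm (Fin (n * j)) => fz ∘ ⇑σ.symm = g) := by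
        rw [Finset.filter_filter]
        apply Finset.filter_congr
        intro σ _
        constructor
        · exact fun h => h.2
        · intro h
          refine ⟨?_, h⟩
          rw [isPseudo_iff, ← hfz, h]
          exact hg
      rw [hset]
      have hcard : (Finset.univ.filter
          (fun σ : Equiv.Perm (Fin (n * j)) => fz ∘ ⇑σ.symm = g)).card =
          Nat.card {τ : Equiv.Perm (Fin (n * j)) // fz ∘ ⇑τ = g} := by
        rw [← Fintype.card_subtype, ← Nat.card_eq_fintype_card]
        refine Nat.card_congr (Equiv.subtypeEquiv
          (Equiv.inv (Equiv.Perm (Fin (n * j)))) fun σ => Iff.rfl)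
      rw [hcard]
      by_cases hfib : ∀ b, fib fz b = fib g b
      · rw [if_pos ⟨hg, hfib⟩, card_perm_comp fz g hfib]
      · rw [if_neg (fun hc => hfib hc.2), card_perm_comp_zero fz g hfib]
    · rw [if_neg (fun hc => hg hc.1)]
      rw [Finset.card_eq_zero, Finset.filter_filter, Finset.filter_eq_empty_iff]
      intro σ _
      rintro ⟨hP, hEq⟩
      apply hg
      rw [← hEq]
      rw [isPseudo_iff] at hP
      exact hP
  rw [Finset.sum_congr rfl (fun g _ => h2 g)]
  rw [Finset.sum_ite, Finset.sum_const_zero, add_zero, Finset.sum_const, smul_eq_mul]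

lemma g_count (hmk : (n * j / k) * k = n * j) (v : Fin M → ℕ)
    (fz : Fin (n * j) → Fin (M + 1)) (hfz : ∀ r : Fin M, fib fz r.succ = j * v r) :
    (Finset.univ.filter (fun g : Fin (n * j) → Fin (M + 1) =>
        GoodF n j k M g ∧ ∀ b, fib fz b = fib g b)).card =
      ((Fintype.piFinset fun _ : Fin (n * j / k) =>
          Finset.univ.filter (fun w : Fin k → Fin (M + 1) => Valid w)).filter
        (fun W => (∑ c, Finsupp.equivFunOnFinite.symm (typeOf (W c))) =
          Finsupp.equivFunOnFinite.symm (fun r => j * v r))).card := by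
  classical
  have hrow : ∀ (g : Fin (n * j) → Fin (M + 1)) (r : Fin M),
      fib g r.succ = ∑ c, typeOf (fun i => g (checkSocket n j k c i)) r := by
    intro g r
    rw [fib_check hmk g r.succ]
    exact Finset.sum_congr rfl fun c _ => (typeOf_eq_fib _ r).symm
  -- key: the fiber-matching condition in terms of rows
  have hcond : ∀ g : Fin (n * j) → Fin (M + 1),
      (∀ b, fib fz b = fib g b) ↔ (∀ r : Fin M, fib g r.succ = j * v r) := by
    intro g
    constructor
    · intro h r; rw [← h r.succ, hfz r]
    · intro h b
      have hsf : ∑ b, fib fz b = ∑ b, fib g b := by rw [sum_fib, sum_fib]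
      rw [Fin.sum_univ_succ, Fin.sum_univ_succ] at hsf
      have hsucc : ∀ r : Fin M, fib fz r.succ = fib g r.succ := fun r => by
        rw [hfz r, h r]
      rw [Finset.sum_congr rfl (fun r _ => hsucc r)] at hsf
      induction b using Fin.cases with
      | zero => omega
      | succ r => exact hsucc r
  have hsumW : ∀ W : Fin (n * j / k) → (Fin k → Fin (M + 1)),
      ((∑ c, Finsupp.equivFunOnFinite.symm (typeOf (W c))) =
          Finsupp.equivFunOnFinite.symm (fun r => j * v r)) ↔
        ∀ r : Fin M, (∑ c, typeOf (W c) r) = j * v r := by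
    intro W
    rw [Finsupp.ext_iff]
    apply forall_congr'
    intro r
    rw [Finset.sum_apply']
    simp only [Finsupp.coe_equivFunOnFinite_symm]
  apply Finset.card_bij
    (i := fun (g : Fin (n * j) → Fin (M + 1)) _ =>
      (fun c i => g (checkSocket n j k c i) : Fin (n * j / k) → Fin k → Fin (M + 1)))
  · intro g hg
    rw [Finset.mem_filter] at hg
    obtain ⟨-, hgood, hfib⟩ := hg
    rw [Finset.mem_filter]
    refine ⟨?_, ?_⟩
    · rw [Fintype.mem_piFinset]
      intro c
      rw [Finset.mem_filter]
      exact ⟨Finset.mem_univ _, hgood c⟩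
    · rw [hsumW]
      intro r
      rw [← hrow g r, ← (hcond g).mp hfib r]
  · intro g hg g' hg' heq
    funext s
    obtain ⟨⟨c, i⟩, rfl⟩ := (cE n j k hmk).surjective s
    rw [cE_apply]
    exact congrFun (congrFun heq c) i
  · intro W hW
    rw [Finset.mem_filter] at hW
    obtain ⟨hpi, hsum⟩ := hW
    rw [Fintype.mem_piFinset] at hpi
    rw [hsumW] at hsum
    set g : Fin (n * j) → Fin (M + 1) :=
      fun s => W ((cE n j k hmk).symm s).1 ((cE n j k hmk).symm s).2 with hgdef
    have hrowg : ∀ c i, g (checkSocket n j k c i) = W c i := by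
      intro c i
      rw [hgdef, ← cE_apply hmk]
      show W ((cE n j k hmk).symm ((cE n j k hmk) (c, i))).1
          ((cE n j k hmk).symm ((cE n j k hmk) (c, i))).2 = W c i
      rw [Equiv.symm_apply_apply]
    refine ⟨g, Finset.mem_filter.mpr ⟨Finset.mem_univ _, ?_, ?_⟩, ?_⟩
    · intro c
      have heqr : (fun i => g (checkSocket n j k c i)) = W c := funext fun i => hrowg c i
      rw [heqr]
      have := hpi c
      rw [Finset.mem_filter] at this
      exact this.2
    · rw [hcond g]
      intro r
      rw [hrow g r]
      rw [Finset.sum_congr rfl (fun c _ => by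
        rw [show (fun i => g (checkSocket n j k c i)) = W c from funext fun i => hrowg c i])]
      exact hsum r
    · funext c i
      exact hrowg c i

end MainCount

/-- in the configuration-model `(j,k)`-regular LDPC ensemble, the
expected number of degree-`M` pseudocodewords of type `(q_1 n, …, q_M n)`
equals `C(n; qn) ⋅ Coeff[(B^{(M)}(x))^m, x^{jqn}] / C(jn; jqn)`. -/
theorem stmt_10 (n j k M : ℕ) (hn : 0 < n) (hj : 1 ≤ j) (hk : 1 ≤ k) (hM : 1 ≤ M)
    (hdvd : k ∣ n * j)
    (q : Fin M → ℚ) (hq0 : ∀ r, 0 ≤ q r) (hq1 : ∑ r, q r ≤ 1)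
    (hqn : ∀ r, ((n : ℚ) * q r).den = 1) :
    expectType n j k M (fun r => ((n : ℚ) * q r).num.toNat) =
      (multCoeff n (fun r => ((n : ℚ) * q r).num.toNat) : ℝ) *
          MvPolynomial.coeff
            (Finsupp.equivFunOnFinite.symm fun r => j * ((n : ℚ) * q r).num.toNat)
            ((Bpoly k M) ^ (n * j / k)) /
        (multCoeff (j * n) (fun r => j * ((n : ℚ) * q r).num.toNat) : ℝ) := by
  classical
  set u : Fin M → ℕ := fun r => ((n : ℚ) * q r).num.toNat with hudef
  have hj' : 0 < j := hj
  -- rational bookkeeping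
  have hqr : ∀ r, ((u r : ℕ) : ℚ) = (n : ℚ) * q r := by
    intro r
    have hnn : (0 : ℚ) ≤ (n : ℚ) * q r := mul_nonneg (by positivity) (hq0 r)
    have hnum : (0 : ℤ) ≤ ((n : ℚ) * q r).num := Rat.num_nonneg.mpr hnn
    have hval : ((((n : ℚ) * q r).num : ℤ) : ℚ) = (n : ℚ) * q r := by
      conv_rhs => rw [← Rat.num_div_den ((n : ℚ) * q r)]
      rw [hqn r]
      simp
    have h2 : ((u r : ℕ) : ℤ) = ((n : ℚ) * q r).num := by
      rw [hudef]
      exact Int.toNat_of_nonneg hnum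
    calc ((u r : ℕ) : ℚ) = (((u r : ℕ) : ℤ) : ℚ) := by push_cast; ring
      _ = ((((n : ℚ) * q r).num : ℤ) : ℚ) := by exact_mod_cast h2
      _ = (n : ℚ) * q r := hval
  have hu : ∑ r, u r ≤ n := by
    have hcast : ((∑ r, u r : ℕ) : ℚ) ≤ (n : ℚ) := by
      push_cast
      rw [Finset.sum_congr rfl (fun r _ => hqr r), ← Finset.mul_sum]
      calc (n : ℚ) * ∑ r, q r ≤ (n : ℚ) * 1 :=
            mul_le_mul_of_nonneg_left hq1 (by positivity)
        _ = (n : ℚ) := mul_one _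
    exact_mod_cast hcast
  have hmk : (n * j / k) * k = n * j := Nat.div_mul_cancel hdvd
  have hju : ∑ r, j * u r ≤ j * n := by
    rw [← Finset.mul_sum]
    exact Nat.mul_le_mul_left j hu
  -- notation
  set A := multCoeff n u with hA
  set D := multCoeff (j * n) (fun r => j * u r) with hDdef
  set F := ∏ b : Fin (M + 1), (fullVec (j * n) (fun r => j * u r) b).factorial with hFdef
  set N := ((Fintype.piFinset fun _ : Fin (n * j / k) =>
      Finset.univ.filter (fun w : Fin k → Fin (M + 1) => Valid w)).filter
    (fun W => (∑ c, Finsupp.equivFunOnFinite.symm (typeOf (W c))) =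
      Finsupp.equivFunOnFinite.symm (fun r => j * u r))).card with hNdef
  have hD : D = Nat.multinomial Finset.univ (fullVec (j * n) (fun r => j * u r)) :=
    multCoeff_eq_multinomial hju
  have hDF : F * D = (j * n).factorial := by
    rw [hFdef, hD, Nat.multinomial_spec, sum_fullVec hju]
  have hDpos : 0 < D := by rw [hD]; exact Nat.multinomial_pos _ _
  have hFpos : 0 < F := Finset.prod_pos fun b _ => Nat.factorial_pos _
  -- fibers of the socket labeling of a type-u assignment
  have hfzfib : ∀ z : Fin n → Fin (M + 1), typeOf z = u →
      ∀ b, fib (fun s => z (varNode n j s)) b = fullVec (j * n) (fun r => j * u r) b := by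
    intro z hz b
    rw [fib_varNode hj' z b]
    have hsucc : ∀ r : Fin M, fib z r.succ = u r := fun r => by
      rw [← typeOf_eq_fib, hz]
    induction b using Fin.cases with
    | zero =>
      have hs := sum_fib z (β := Fin (M + 1))
      rw [Fin.sum_univ_succ] at hs
      simp only [Fintype.card_fin] at hs
      rw [Finset.sum_congr rfl (fun r _ => hsucc r)] at hs
      simp only [fullVec, Fin.cons_zero]
      have hmul : j * fib z 0 + j * ∑ r, u r = j * n := by
        rw [← Nat.mul_add, hs]
      have hms : ∑ r, j * u r = j * ∑ r, u r := by rw [Finset.mul_sum]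
      rw [← hms] at hmul
      exact Nat.eq_sub_of_add_eq hmul
    | succ r =>
      rw [hsucc r]
      simp [fullVec]
  -- per-z permutation count
  have hNz : ∀ z : Fin n → Fin (M + 1), typeOf z = u →
      (Finset.univ.filter fun σ : Equiv.Perm (Fin (n * j)) =>
        IsPseudocodeword n j k M σ z).card = N * F := by
    intro z hz
    rw [perm_count z]
    congr 1
    · rw [hNdef]
      exact g_count hmk u (fun s => z (varNode n j s)) (fun r => by
        rw [hfzfib z hz r.succ]
        simp [fullVec])
    · rw [hFdef]
      exact Finset.prod_congr rfl fun b _ => by rw [hfzfib z hz b]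
  -- total count over σ
  have hTot : ∑ σ : Equiv.Perm (Fin (n * j)), countType n j k M σ u = A * (N * F) := by
    have hct : ∀ σ : Equiv.Perm (Fin (n * j)), countType n j k M σ u =
        (Finset.univ.filter fun z : Fin n → Fin (M + 1) =>
          IsPseudocodeword n j k M σ z ∧ typeOf z = u).card := by
      intro σ
      rw [countType, Nat.card_eq_fintype_card, Fintype.card_subtype]
      congr 1
      apply Finset.filter_congr
      intro z _
      constructor
      · rintro ⟨h1, h2⟩; exact ⟨h1, funext h2⟩
      · rintro ⟨h1, h2⟩; exact ⟨h1, fun r => congrFun h2 r⟩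
    rw [Finset.sum_congr rfl fun σ _ => hct σ]
    have hswap : ∑ σ : Equiv.Perm (Fin (n * j)),
        (Finset.univ.filter fun z : Fin n → Fin (M + 1) =>
          IsPseudocodeword n j k M σ z ∧ typeOf z = u).card =
        ∑ z ∈ Finset.univ.filter (fun z : Fin n → Fin (M + 1) => typeOf z = u),
          (Finset.univ.filter fun σ : Equiv.Perm (Fin (n * j)) =>
            IsPseudocodeword n j k M σ z).card := by
      simp_rw [Finset.card_filter]
      rw [Finset.sum_comm, Finset.sum_filter]
      apply Finset.sum_congr rfl
      intro z _
      by_cases hz : typeOf z = u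
      · simp [hz]
      · simp [hz]
    rw [hswap, Finset.sum_congr rfl (fun z hz => hNz z (Finset.mem_filter.mp hz).2),
      Finset.sum_const, smul_eq_mul, card_type_eq hu]
  -- final algebra
  rw [expectType, coeff_Bpoly_pow, ← hNdef]
  have hsum' : ∑ σ : Equiv.Perm (Fin (n * j)), (countType n j k M σ u : ℝ) =
      ((A * (N * F) : ℕ) : ℝ) := by
    rw [← Nat.cast_sum, hTot]
  rw [hsum']
  have hfact : ((n * j).factorial : ℝ) = (D : ℝ) * (F : ℝ) := by
    rw [mul_comm n j, ← hDF]
    push_cast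
    ring
  rw [hfact]
  have hD0 : (D : ℝ) ≠ 0 := by positivity
  have hF0 : (F : ℝ) ≠ 0 := by positivity
  rw [div_eq_div_iff (by positivity) hD0]
  push_cast
  ring
end Infra
end

section
/- Fix integers j, k, M ≥ 1. Let Ω ⊆ ℝ^M be an open set of vectors q = (q_1, …, q_M) with q_r > 0 for all r and Σ_r q_r < 1, and suppose q ↦ x_0(q) is a differentiable map on Ω taking values in strictly positive vectors and satisfying x_{0,r}(q) · ∂B^{(M)}/∂x_r(x_0(q)) = k q_r B^{(M)}(x_0(q)) for each r = 1, …, M and each q ∈ Ω. Define f(q) = (j/k)·log B^{(M)}(x_0(q)) − j·Σ_{r=1}^M q_r log x_{0,r}(q) − (j−1)·h(q). Then for every q ∈ Ω and every r = 1, …, M, ∂f/∂q_r (q) = (j−1)·log( q_r / (1 − Σ_{s=1}^M q_s) ) − j·log x_{0,r}(q). -/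
open Finset MvPolynomial

/-- The multivariate entropy function
`h(q) = -∑_r q_r log q_r - (1 - ∑_r q_r) log (1 - ∑_r q_r)`. -/
noncomputable def entropyFun (M : ℕ) (q : Fin M → ℝ) : ℝ :=
  -∑ r, q r * Real.log (q r) - (1 - ∑ r, q r) * Real.log (1 - ∑ r, q r)

/-- `f(q) = (j/k) log B^{(M)}(x₀(q)) - j ∑_r q_r log x₀_r(q) - (j-1) h(q)`. -/
noncomputable def fFun (j k M : ℕ) (x0 : (Fin M → ℝ) → Fin M → ℝ)
    (q : Fin M → ℝ) : ℝ :=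
  ((j : ℝ) / (k : ℝ)) * Real.log (MvPolynomial.eval (x0 q) (Bpoly k M)) -
    (j : ℝ) * ∑ r, q r * Real.log (x0 q r) - ((j : ℝ) - 1) * entropyFun M q

lemma hasFDerivAt_mveval {M : ℕ} (p : MvPolynomial (Fin M) ℝ) (x : Fin M → ℝ) :
    HasFDerivAt (fun y : Fin M → ℝ => MvPolynomial.eval y p)
      (∑ s : Fin M, MvPolynomial.eval x (MvPolynomial.pderiv s p) •
        (ContinuousLinearMap.proj s : (Fin M → ℝ) →L[ℝ] ℝ)) x := by
  induction p using MvPolynomial.induction_on with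
  | C a =>
      simpa using (hasFDerivAt_const a x : HasFDerivAt (fun _ : Fin M → ℝ => a) 0 x)
  | add p q hp hq =>
      have := hp.fun_add hq
      simp only [map_add] at this ⊢
      refine this.congr_fderiv (Eq.symm ?_)
      simp [add_smul, Finset.sum_add_distrib]
  | mul_X p n hp =>
      have hn : HasFDerivAt (fun y : Fin M → ℝ => y n)
          (ContinuousLinearMap.proj n : (Fin M → ℝ) →L[ℝ] ℝ) x :=
        hasFDerivAt_apply n x
      have := hp.fun_mul hn
      simp only [eval_mul, eval_X] at this ⊢
      refine this.congr_fderiv (Eq.symm ?_)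
      ext v
      simp [pderiv_mul, pderiv_X, Pi.single_apply, Finset.sum_add_distrib, apply_ite (eval x),
        mul_ite, mul_zero, Finset.sum_ite_eq, Finset.mul_sum, mul_add, Finset.sum_add_distrib,
        mul_comm, mul_assoc, mul_left_comm]

lemma bpoly_eval_pos (k M : ℕ) (x : Fin M → ℝ) (hx : ∀ r, 0 < x r) :
    0 < MvPolynomial.eval x (Bpoly k M) := by
  have h0 : (fun _ : Fin M => 0) ∈ Sset k M := by
    simp [Sset, Fintype.mem_piFinset]
  have hterm : ∀ u ∈ Sset k M,
      0 ≤ MvPolynomial.eval x (MvPolynomial.C (multCoeff k u : ℝ) *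
        ∏ r : Fin M, MvPolynomial.X r ^ u r) := by
    intro u _
    simp only [map_mul, eval_C, map_prod, eval_X, map_pow]
    exact mul_nonneg (Nat.cast_nonneg _)
      (Finset.prod_nonneg fun r _ => pow_nonneg (hx r).le _)
  have h0val : MvPolynomial.eval x (MvPolynomial.C (multCoeff k (fun _ : Fin M => 0) : ℝ) *
      ∏ r : Fin M, MvPolynomial.X r ^ (0:ℕ)) = 1 := by
    simp [multCoeff, Nat.div_self (Nat.factorial_pos k)]
  rw [Bpoly, map_sum]
  have hle := Finset.sum_le_sum_of_subset_of_nonneg (s := {(fun _ : Fin M => 0)})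
    (t := Sset k M) (by simpa using h0) (fun u hu _ => hterm u hu)
  calc (0:ℝ) < 1 := one_pos
    _ = ∑ u ∈ {(fun _ : Fin M => 0)}, MvPolynomial.eval x
        (MvPolynomial.C (multCoeff k u : ℝ) * ∏ r : Fin M, MvPolynomial.X r ^ u r) := by
        simpa using h0val.symm
    _ ≤ _ := hle

/-- on an open set `Ω` of positive vectors `q` with `∑ q_r < 1`
on which a differentiable map `q ↦ x₀(q)` of strictly positive solutions of
`x₀_r ∂B^{(M)}/∂x_r(x₀) = k q_r B^{(M)}(x₀)` is given, `f` is differentiable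
and `∂f/∂q_r(q) = (j-1) log(q_r / (1 - ∑_s q_s)) - j log x₀_r(q)`. -/
theorem stmt_13 (j k M : ℕ) (hj : 1 ≤ j) (hk : 1 ≤ k) (hM : 1 ≤ M)
    (Ω : Set (Fin M → ℝ)) (hΩopen : IsOpen Ω)
    (hΩ : ∀ q ∈ Ω, (∀ r, 0 < q r) ∧ ∑ r, q r < 1)
    (x0 : (Fin M → ℝ) → Fin M → ℝ)
    (hx0diff : DifferentiableOn ℝ x0 Ω)
    (hx0pos : ∀ q ∈ Ω, ∀ r, 0 < x0 q r)
    (hx0eq : ∀ q ∈ Ω, ∀ r,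
      x0 q r * MvPolynomial.eval (x0 q) (MvPolynomial.pderiv r (Bpoly k M)) =
        (k : ℝ) * q r * MvPolynomial.eval (x0 q) (Bpoly k M)) :
    ∀ q ∈ Ω, DifferentiableAt ℝ (fFun j k M x0) q ∧
      ∀ r : Fin M, fderiv ℝ (fFun j k M x0) q (Pi.single r 1) =
        ((j : ℝ) - 1) * Real.log (q r / (1 - ∑ s, q s)) -
          (j : ℝ) * Real.log (x0 q r) := by
  intro q hq
  obtain ⟨hq1, hq2⟩ := hΩ q hq
  have hx0p : ∀ s, 0 < x0 q s := hx0pos q hq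
  have hxd : DifferentiableAt ℝ x0 q :=
    (hx0diff q hq).differentiableAt (hΩopen.mem_nhds hq)
  set D := fderiv ℝ x0 q with hD
  have hx0f : HasFDerivAt x0 D q := hxd.hasFDerivAt
  have bpos : 0 < MvPolynomial.eval (x0 q) (Bpoly k M) := bpoly_eval_pos k M (x0 q) hx0p
  have hBq : HasFDerivAt (fun q' => MvPolynomial.eval (x0 q') (Bpoly k M))
      ((∑ s : Fin M, MvPolynomial.eval (x0 q) (MvPolynomial.pderiv s (Bpoly k M)) •
        (ContinuousLinearMap.proj s : (Fin M → ℝ) →L[ℝ] ℝ)).comp D) q :=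
    (hasFDerivAt_mveval (Bpoly k M) (x0 q)).comp q hx0f
  have hlogB := hBq.log bpos.ne'
  have hx0s : ∀ s : Fin M, HasFDerivAt (fun q' => x0 q' s)
      ((ContinuousLinearMap.proj s : (Fin M → ℝ) →L[ℝ] ℝ).comp D) q :=
    fun s => (hasFDerivAt_apply (𝕜 := ℝ) (F' := fun _ : Fin M => ℝ) s (x0 q)).comp q hx0f
  have hlogx : ∀ s : Fin M, HasFDerivAt (fun q' => Real.log (x0 q' s))
      ((x0 q s)⁻¹ • ((ContinuousLinearMap.proj s : (Fin M → ℝ) →L[ℝ] ℝ).comp D)) q :=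
    fun s => (hx0s s).log (hx0p s).ne'
  have hqproj : ∀ s : Fin M, HasFDerivAt (fun q' : Fin M → ℝ => q' s)
      (ContinuousLinearMap.proj s : (Fin M → ℝ) →L[ℝ] ℝ) q := fun s => hasFDerivAt_apply s q
  have hsum : HasFDerivAt (fun q' => ∑ s, q' s * Real.log (x0 q' s))
      (∑ s : Fin M, ((q s) • ((x0 q s)⁻¹ •
          ((ContinuousLinearMap.proj s : (Fin M → ℝ) →L[ℝ] ℝ).comp D)) +
        Real.log (x0 q s) • (ContinuousLinearMap.proj s : (Fin M → ℝ) →L[ℝ] ℝ))) q :=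
    HasFDerivAt.fun_sum fun s _ => (hqproj s).mul (hlogx s)
  have hent1 : HasFDerivAt (fun q' : Fin M → ℝ => ∑ s, q' s * Real.log (q' s))
      (∑ s : Fin M, ((q s) • ((q s)⁻¹ •
          (ContinuousLinearMap.proj s : (Fin M → ℝ) →L[ℝ] ℝ)) +
        Real.log (q s) • (ContinuousLinearMap.proj s : (Fin M → ℝ) →L[ℝ] ℝ))) q :=
    HasFDerivAt.fun_sum fun s _ => (hqproj s).mul ((hqproj s).log (hq1 s).ne')
  have h1S : HasFDerivAt (fun q' : Fin M → ℝ => 1 - ∑ s, q' s)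
      (0 - ∑ s : Fin M, (ContinuousLinearMap.proj s : (Fin M → ℝ) →L[ℝ] ℝ)) q :=
    (hasFDerivAt_const 1 q).sub (HasFDerivAt.fun_sum fun s _ => hqproj s)
  have h1Spos : (0:ℝ) < 1 - ∑ s, q s := by linarith
  have hent2 := h1S.fun_mul (h1S.log h1Spos.ne')
  have hmain := ((hlogB.const_mul ((j:ℝ)/(k:ℝ))).fun_sub (hsum.const_mul (j:ℝ))).fun_sub
    ((hent1.fun_neg.fun_sub hent2).const_mul ((j:ℝ)-1))
  have hfun : fFun j k M x0 = fun q' =>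
      ((j : ℝ) / (k : ℝ)) * Real.log (MvPolynomial.eval (x0 q') (Bpoly k M)) -
        (j : ℝ) * ∑ r, q' r * Real.log (x0 q' r) -
        ((j : ℝ) - 1) * (-∑ s, q' s * Real.log (q' s) -
          (1 - ∑ s, q' s) * Real.log (1 - ∑ s, q' s)) := rfl
  rw [hfun]
  refine ⟨hmain.differentiableAt, ?_⟩
  intro r
  rw [hmain.fderiv]
  have hkR : (k:ℝ) ≠ 0 := Nat.cast_ne_zero.mpr (by omega)
  have hev : ∀ s : Fin M, MvPolynomial.eval (x0 q) (MvPolynomial.pderiv s (Bpoly k M)) =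
      (k:ℝ) * q s * MvPolynomial.eval (x0 q) (Bpoly k M) / x0 q s := by
    intro s
    rw [eq_div_iff (hx0p s).ne', mul_comm _ (x0 q s)]
    exact hx0eq q hq s
  simp only [ContinuousLinearMap.sub_apply, ContinuousLinearMap.add_apply,
    ContinuousLinearMap.smul_apply, ContinuousLinearMap.comp_apply,
    ContinuousLinearMap.coe_sum', Finset.sum_apply, ContinuousLinearMap.proj_apply,
    ContinuousLinearMap.neg_apply, ContinuousLinearMap.zero_apply, smul_eq_mul,
    Pi.single_apply]
  rw [Real.log_div (hq1 r).ne' h1Spos.ne']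
  have hcollapse : ∀ c : Fin M → ℝ,
      (∑ s : Fin M, c s * (if s = r then (1:ℝ) else 0)) = c r := by
    intro c
    simp [mul_ite, Finset.sum_ite_eq']
  have hsingle : (∑ s : Fin M, (if s = r then (1:ℝ) else 0)) = 1 := by
    simp [Finset.sum_ite_eq']
  have hsum1 : ∑ x : Fin M, (MvPolynomial.eval (x0 q)) ((MvPolynomial.pderiv x) (Bpoly k M)) *
        D (Pi.single r 1) x
      = ((k:ℝ) * MvPolynomial.eval (x0 q) (Bpoly k M)) *
        ∑ x : Fin M, q x * ((x0 q x)⁻¹ * D (Pi.single r 1) x) := by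
    rw [Finset.mul_sum]
    refine Finset.sum_congr rfl fun s _ => ?_
    rw [hev s]
    field_simp
  rw [hsum1]
  simp only [Finset.sum_add_distrib, mul_ite, mul_one, mul_zero, Finset.sum_ite_eq',
    Finset.mem_univ, if_true, hsingle]
  have hb : MvPolynomial.eval (x0 q) (Bpoly k M) ≠ 0 := bpos.ne'
  have hqr : q r ≠ 0 := (hq1 r).ne'
  have hSne : (1 - ∑ s : Fin M, q s) ≠ 0 := h1Spos.ne'
  field_simp
  ring
end
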